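/- (Higher-order Euler–Lagrange equations characterize critical points, standard case.) Let n, k ≥ 1, t₀ < t₁, let L : (Fin (k+1) → ℝ^n) → ℝ be smooth, and let q : ℝ → ℝ^n be smooth. Then the following are equivalent: (a) for every smooth h : ℝ → ℝ^n with h^{(j)}(t₀) = h^{(j)}(t₁) = 0 for all 0 ≤ j ≤ k−1, the function s ↦ ∫_{t₀}^{t₁} L(jet_k(q + s•h)(t)) dt has derivative 0 at s = 0; (b) ∑_{r=0}^{k} (−1)^r · D^r[t ↦ ∂_rL(jet_k q(t))](t) = 0 in (ℝ^n →ₗ[ℝ] ℝ) for all t ∈ [t₀, t₁], where D^r denotes the r-th iterated derivative of the (ℝ^n →ₗ[ℝ] ℝ)-valued map. -/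

import Mathlib

noncomputable section

/-- Partial Fréchet derivative in slot `r` of a map defined on `Fin m → E`,
as a continuous linear map (zero junk value for `r ≥ m`). -/
def pd {m : ℕ} {E W : Type*} [NormedAddCommGroup E] [NormedSpace ℝ E]
    [NormedAddCommGroup W] [NormedSpace ℝ W]
    (F : (Fin m → E) → W) (r : ℕ) (A : Fin m → E) : E →L[ℝ] W :=
  if h : r < m then
    (fderiv ℝ F A).comp
      (ContinuousLinearMap.pi (Pi.single (⟨r, h⟩ : Fin m) (ContinuousLinearMap.id ℝ E)))
  else 0

/-- The `k`-jet of a curve: `jet k q t = (q t, q' t, …, q^{(k)} t)`. -/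
def jet {E : Type*} [NormedAddCommGroup E] [NormedSpace ℝ E] (k : ℕ) (q : ℝ → E) (t : ℝ) :
    Fin (k + 1) → E := fun r => iteratedDeriv r q t

open MeasureTheory Set Filter Topology intervalIntegral

section Helpers

variable {E : Type*} [NormedAddCommGroup E] [NormedSpace ℝ E]

lemma contDiff_iteratedDeriv (r : ℕ) {q : ℝ → E} (hq : ContDiff ℝ (⊤ : ℕ∞) q) :
    ContDiff ℝ (⊤ : ℕ∞) (iteratedDeriv r q) := by
  rw [iteratedDeriv_eq_iterate]; exact hq.iterate_deriv r

lemma contDiff_deriv {q : ℝ → E} (hq : ContDiff ℝ (⊤ : ℕ∞) q) :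
    ContDiff ℝ (⊤ : ℕ∞) (deriv q) := by
  have := hq.iterate_deriv 1
  simpa using this

lemma contDiff_jet (k : ℕ) {q : ℝ → E} (hq : ContDiff ℝ (⊤ : ℕ∞) q) :
    ContDiff ℝ (⊤ : ℕ∞) (jet k q) :=
  contDiff_pi.2 fun r => contDiff_iteratedDeriv r hq

lemma jet_add_smul (k : ℕ) {q h : ℝ → E} (hq : ContDiff ℝ (⊤ : ℕ∞) q)
    (hh : ContDiff ℝ (⊤ : ℕ∞) h) (s : ℝ) (t : ℝ) :
    jet k (q + s • h) t = jet k q t + s • jet k h t := by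
  funext r
  have hq' : ContDiffOn ℝ r q univ := (hq.of_le (by exact_mod_cast le_top)).contDiffOn
  have hh' : ContDiffOn ℝ r (s • h) univ :=
    ((hh.of_le (by exact_mod_cast le_top)).const_smul s).contDiffOn
  have hh'' : ContDiffOn ℝ r h univ := (hh.of_le (by exact_mod_cast le_top)).contDiffOn
  show iteratedDeriv r (q + s • h) t = iteratedDeriv r q t + s • iteratedDeriv r h t
  rw [← iteratedDerivWithin_univ, ← iteratedDerivWithin_univ, ← iteratedDerivWithin_univ,
    iteratedDerivWithin_add (mem_univ t) uniqueDiffOn_univ (hq'.contDiffWithinAt (mem_univ t)) (hh'.contDiffWithinAt (mem_univ t)),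
    iteratedDerivWithin_const_smul (mem_univ t) uniqueDiffOn_univ s (hh''.contDiffWithinAt (mem_univ t))]

lemma pd_apply {m : ℕ} {W : Type*} [NormedAddCommGroup W] [NormedSpace ℝ W]
    (F : (Fin m → E) → W) (i : Fin m) (A : Fin m → E) (e : E) :
    pd F i A e = fderiv ℝ F A (Pi.single i e) := by
  rw [pd, dif_pos i.isLt]
  simp only [Fin.eta, ContinuousLinearMap.comp_apply]
  congr 1
  funext j
  rw [ContinuousLinearMap.pi_apply]
  rcases eq_or_ne j i with rfl | hj
  · simp
  · simp [Pi.single_apply, hj]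

lemma contDiff_pd {m : ℕ} {L : (Fin m → E) → ℝ} (hL : ContDiff ℝ (⊤ : ℕ∞) L) (r : ℕ) :
    ContDiff ℝ (⊤ : ℕ∞) (pd L r) := by
  unfold pd
  split
  · exact ContDiff.clm_comp (hL.fderiv_right (by exact_mod_cast le_top)) contDiff_const
  · exact contDiff_const


example {m : ℕ} (L : (Fin m → E) → ℝ) (A v : Fin m → E) :
    fderiv ℝ L A v = ∑ i : Fin m, fderiv ℝ L A (Pi.single i (v i)) := by
  rw [← map_sum]
  congr 1
  exact (Finset.univ_sum_single v).symm

-- one-step integration by parts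
lemma ibp_step {t₀ t₁ : ℝ} {f : ℝ → E →L[ℝ] ℝ} {g : ℝ → E}
    (hf : ContDiff ℝ (⊤ : ℕ∞) f) (hg : ContDiff ℝ (⊤ : ℕ∞) g)
    (h₀ : g t₀ = 0) (h₁ : g t₁ = 0) :
    ∫ t in t₀..t₁, f t (deriv g t) = - ∫ t in t₀..t₁, (deriv f t) (g t) := by
  have hfd : Differentiable ℝ f := hf.differentiable (by simp)
  have hgd : Differentiable ℝ g := hg.differentiable (by simp)
  have hcf : Continuous f := hf.continuous
  have hcg : Continuous g := hg.continuous
  have hcf' : Continuous (deriv f) := (contDiff_deriv hf).continuous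
  have hcg' : Continuous (deriv g) := (contDiff_deriv hg).continuous
  have key : ∀ t ∈ uIcc t₀ t₁, HasDerivAt (fun u => f u (g u))
      ((deriv f t) (g t) + (f t) (deriv g t)) t := fun t _ =>
    ((hfd t).hasDerivAt).clm_apply ((hgd t).hasDerivAt)
  have hint1 : IntervalIntegrable (fun t => (deriv f t) (g t)) volume t₀ t₁ :=
    ((hcf'.clm_apply hcg)).intervalIntegrable _ _
  have hint2 : IntervalIntegrable (fun t => (f t) (deriv g t)) volume t₀ t₁ :=
    ((hcf.clm_apply hcg')).intervalIntegrable _ _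
  have := intervalIntegral.integral_eq_sub_of_hasDerivAt key (hint1.add hint2)
  rw [h₀, h₁] at this
  simp only [map_zero] at this
  rw [intervalIntegral.integral_add hint1 hint2] at this
  linarith

lemma ibp {t₀ t₁ : ℝ} (r : ℕ) {f : ℝ → E →L[ℝ] ℝ} {g : ℝ → E}
    (hf : ContDiff ℝ (⊤ : ℕ∞) f) (hg : ContDiff ℝ (⊤ : ℕ∞) g)
    (hbc : ∀ j < r, iteratedDeriv j g t₀ = 0 ∧ iteratedDeriv j g t₁ = 0) :
    ∫ t in t₀..t₁, f t (iteratedDeriv r g t)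
      = ∫ t in t₀..t₁, ((-1 : ℝ) ^ r • iteratedDeriv r f t) (g t) := by
  induction r generalizing f with
  | zero => simp [iteratedDeriv_zero]
  | succ r ih =>
    have hgr : ContDiff ℝ (⊤ : ℕ∞) (iteratedDeriv r g) := by
      rw [iteratedDeriv_eq_iterate]; exact hg.iterate_deriv r
    have step : ∫ t in t₀..t₁, f t (iteratedDeriv (r+1) g t)
        = - ∫ t in t₀..t₁, (deriv f t) (iteratedDeriv r g t) := by
      simp only [iteratedDeriv_succ]
      exact ibp_step hf hgr (hbc r (Nat.lt_succ_self r)).1 (hbc r (Nat.lt_succ_self r)).2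
    rw [step, ih (contDiff_deriv hf) (fun j hj => hbc j (hj.trans (Nat.lt_succ_self r)))]
    rw [← intervalIntegral.integral_neg]
    congr 1
    funext t
    rw [← iteratedDeriv_succ']
    simp [pow_succ, neg_smul, ContinuousLinearMap.neg_apply]

lemma key_hasDerivAt (k : ℕ) (t₀ t₁ : ℝ) {L : (Fin (k+1) → E) → ℝ}
    (hL : ContDiff ℝ (⊤ : ℕ∞) L) {q h : ℝ → E}
    (hq : ContDiff ℝ (⊤ : ℕ∞) q) (hh : ContDiff ℝ (⊤ : ℕ∞) h) :
    HasDerivAt (fun s : ℝ => ∫ t in t₀..t₁, L (jet k (q + s • h) t))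
      (∫ t in t₀..t₁, ∑ i : Fin (k+1), pd L i (jet k q t) (iteratedDeriv i h t)) 0 := by
  have hLd : Differentiable ℝ L := hL.differentiable (by simp)
  have hjq : Continuous (jet k q) := (contDiff_jet k hq).continuous
  have hjh : Continuous (jet k h) := (contDiff_jet k hh).continuous
  have hL' : Continuous (fderiv ℝ L) :=
    (hL.fderiv_right (m := 0) (by exact_mod_cast le_top)).continuous
  set F' : ℝ → ℝ → ℝ := fun s t => fderiv ℝ L (jet k q t + s • jet k h t) (jet k h t) with hF'
  -- continuity of the two-variable derivative
  have hcont : Continuous fun p : ℝ × ℝ => F' p.1 p.2 := by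
    apply Continuous.clm_apply
    · exact hL'.comp ((hjq.comp continuous_snd).add
        ((continuous_fst.smul (hjh.comp continuous_snd))))
    · exact hjh.comp continuous_snd
  -- bound on a compact set
  obtain ⟨C, hC⟩ : ∃ C, ∀ p ∈ (Icc (-1:ℝ) 1) ×ˢ uIcc t₀ t₁, ‖F' p.1 p.2‖ ≤ C :=
    ((isCompact_Icc.prod isCompact_uIcc).exists_bound_of_continuousOn hcont.continuousOn)
  have hFs : ∀ s : ℝ, Continuous fun t => L (jet k (q + s • h) t) := by
    intro s
    have : Continuous fun t => jet k q t + s • jet k h t := hjq.add (hjh.const_smul s)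
    have h2 : Continuous fun t => L (jet k q t + s • jet k h t) := hL.continuous.comp this
    convert h2 using 2 with t
    rw [jet_add_smul k hq hh]
  have hderiv : ∀ t : ℝ, ∀ s : ℝ, HasDerivAt (fun x : ℝ => L (jet k (q + x • h) t)) (F' s t) s := by
    intro t s
    have inner : HasDerivAt (fun x : ℝ => jet k q t + x • jet k h t) (jet k h t) s := by
      simpa using ((hasDerivAt_id s).smul_const (jet k h t)).const_add (jet k q t)
    have hcomp := (hLd (jet k q t + s • jet k h t)).hasFDerivAt.comp_hasDerivAt s inner
    have heq : (fun x : ℝ => L (jet k (q + x • h) t))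
        = (L ∘ fun x : ℝ => jet k q t + x • jet k h t) := by
      funext x; simp [Function.comp, jet_add_smul k hq hh]
    rw [heq]; exact hcomp
  have main := intervalIntegral.hasDerivAt_integral_of_dominated_loc_of_deriv_le
    (F := fun s t => L (jet k (q + s • h) t)) (F' := F') (x₀ := (0:ℝ)) (bound := fun _ => C)
    (μ := volume) (a := t₀) (b := t₁) (Metric.ball_mem_nhds (0:ℝ) one_pos)
    (Eventually.of_forall fun s => ((hFs s).aestronglyMeasurable).restrict)
    (((hFs 0)).intervalIntegrable _ _)
    ((hcont.comp (continuous_const.prodMk continuous_id)).aestronglyMeasurable.restrict)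
    (Eventually.of_forall fun t ht x hx => by
      have hx' : |x| < 1 := by simpa [Real.norm_eq_abs] using mem_ball_zero_iff.1 hx
      exact hC (x, t) ⟨mem_Icc.2 (abs_le.1 hx'.le), uIoc_subset_uIcc ht⟩)
    intervalIntegrable_const
    (Eventually.of_forall fun t _ x _ => hderiv t x)
  have hval : ∀ t, F' 0 t = ∑ i : Fin (k+1), pd L i (jet k q t) (iteratedDeriv i h t) := by
    intro t
    simp only [hF', zero_smul, add_zero]
    calc fderiv ℝ L (jet k q t) (jet k h t)
        = fderiv ℝ L (jet k q t) (∑ i, Pi.single i (jet k h t i)) := by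
          rw [Finset.univ_sum_single]
      _ = ∑ i, fderiv ℝ L (jet k q t) (Pi.single i (jet k h t i)) := map_sum _ _ _
      _ = ∑ i : Fin (k+1), pd L i (jet k q t) (iteratedDeriv i h t) := by
          refine Finset.sum_congr rfl fun i _ => ?_
          rw [pd_apply]; rfl
  have hfin := main.2
  simpa only [hval] using hfin

lemma action_hasDerivAt (k : ℕ) {t₀ t₁ : ℝ} {L : (Fin (k+1) → E) → ℝ}
    (hL : ContDiff ℝ (⊤ : ℕ∞) L) {q h : ℝ → E}
    (hq : ContDiff ℝ (⊤ : ℕ∞) q) (hh : ContDiff ℝ (⊤ : ℕ∞) h)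
    (hbc : ∀ j < k, iteratedDeriv j h t₀ = 0 ∧ iteratedDeriv j h t₁ = 0) :
    HasDerivAt (fun s : ℝ => ∫ t in t₀..t₁, L (jet k (q + s • h) t))
      (∫ t in t₀..t₁, (∑ r ∈ Finset.range (k + 1),
          (-1 : ℝ) ^ r • iteratedDeriv r (fun u => pd L r (jet k q u)) t) (h t)) 0 := by
  have hf : ∀ r : ℕ, ContDiff ℝ (⊤ : ℕ∞) (fun u => pd L r (jet k q u)) :=
    fun r => (contDiff_pd hL r).comp (contDiff_jet k hq)
  have hcont1 : ∀ i : Fin (k+1),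
      Continuous fun t => pd L i (jet k q t) (iteratedDeriv i h t) := fun i =>
    ((hf i).continuous.clm_apply (contDiff_iteratedDeriv i hh).continuous)
  have hcont2 : ∀ i : Fin (k+1), Continuous fun t =>
      ((-1:ℝ)^(i:ℕ) • iteratedDeriv i (fun u => pd L i (jet k q u)) t) (h t) := fun i =>
    (((contDiff_iteratedDeriv i (hf i)).continuous.const_smul ((-1:ℝ)^(i:ℕ))).clm_apply hh.continuous)
  have hEq : (∫ t in t₀..t₁, ∑ i : Fin (k+1), pd L i (jet k q t) (iteratedDeriv i h t))
      = ∫ t in t₀..t₁, (∑ r ∈ Finset.range (k + 1),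
          (-1 : ℝ) ^ r • iteratedDeriv r (fun u => pd L r (jet k q u)) t) (h t) := by
    rw [intervalIntegral.integral_finset_sum
      (fun i _ => (hcont1 i).intervalIntegrable _ _)]
    have step : ∀ i : Fin (k+1),
        (∫ t in t₀..t₁, pd L i (jet k q t) (iteratedDeriv i h t))
        = ∫ t in t₀..t₁, ((-1:ℝ)^(i:ℕ) • iteratedDeriv i (fun u => pd L i (jet k q u)) t) (h t) := by
      intro i
      exact ibp i (hf i) hh (fun j hj => hbc j (lt_of_lt_of_le hj (Nat.lt_succ_iff.1 i.isLt)))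
    rw [Finset.sum_congr rfl (fun i _ => step i),
      ← intervalIntegral.integral_finset_sum (fun i _ => (hcont2 i).intervalIntegrable _ _)]
    congr 1
    funext t
    rw [ContinuousLinearMap.sum_apply]
    exact (Fin.sum_univ_eq_sum_range
      (fun r => ((-1:ℝ)^r • iteratedDeriv r (fun u => pd L r (jet k q u)) t) (h t)) (k+1)).symm ▸ rfl
  rw [← hEq]
  exact key_hasDerivAt k t₀ t₁ hL hq hh

lemma fundamental {t₀ t₁ : ℝ} (ht : t₀ < t₁) {Ef : ℝ → E →L[ℝ] ℝ} (hEf : Continuous Ef)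
    (hyp : ∀ h : ℝ → E, ContDiff ℝ (⊤ : ℕ∞) h →
      (∀ j, iteratedDeriv j h t₀ = 0 ∧ iteratedDeriv j h t₁ = 0) →
      (∫ t in t₀..t₁, Ef t (h t)) = 0) :
    ∀ t ∈ Icc t₀ t₁, Ef t = 0 := by
  have hIoo : ∀ t ∈ Ioo t₀ t₁, Ef t = 0 := by
    intro t htm
    refine ContinuousLinearMap.ext fun v => ?_
    rw [ContinuousLinearMap.zero_apply]
    by_contra hc
    set g : ℝ → ℝ := fun u => Ef u v with hg
    have hgc : Continuous g := hEf.clm_apply continuous_const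
    set c : ℝ := g t with hcdef
    have hcpos : 0 < |c| := abs_pos.2 hc
    -- continuity: choose δ
    obtain ⟨δ, hδpos, hδ⟩ : ∃ δ > 0, ∀ u, dist u t < δ → |g u - c| < |c|/2 := by
      have h2 := Metric.continuousAt_iff.1 (hgc.continuousAt (x := t)) (|c|/2) (by positivity)
      obtain ⟨δ, hδpos, hδ⟩ := h2
      exact ⟨δ, hδpos, fun u hu => by simpa [Real.dist_eq, hcdef] using hδ hu⟩
    set δt : ℝ := min (t - t₀) (t₁ - t) with hδt
    have hδtpos : 0 < δt := lt_min (by linarith [htm.1]) (by linarith [htm.2])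
    set R : ℝ := min δ δt / 2 with hR
    have hRpos : 0 < R := by positivity
    have hRδ : R < δ := by
      have : min δ δt ≤ δ := min_le_left _ _
      have h2 : min δ δt / 2 < min δ δt := by
        have : 0 < min δ δt := lt_min hδpos hδtpos
        linarith
      calc R < min δ δt := h2
        _ ≤ δ := min_le_left _ _
    have hRδt : R < δt := by
      have h2 : min δ δt / 2 < min δ δt := by
        have : 0 < min δ δt := lt_min hδpos hδtpos
        linarith
      calc R < min δ δt := h2
        _ ≤ δt := min_le_right _ _
    set φ : ContDiffBump t := ⟨R/2, R, by positivity, by linarith⟩ with hφ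
    set h : ℝ → E := fun u => φ u • v with hhdef
    have hhsm : ContDiff ℝ (⊤ : ℕ∞) h := φ.contDiff.smul contDiff_const
    have hzero : ∀ y : ℝ, R < dist y t → ∀ j, iteratedDeriv j h y = 0 := by
      intro y hy j
      have hopen : IsOpen (Metric.closedBall t R)ᶜ := Metric.isClosed_closedBall.isOpen_compl
      have hev : h =ᶠ[𝓝 y] (fun _ => 0) := by
        filter_upwards [hopen.mem_nhds (by
          simpa [Metric.mem_closedBall, not_le] using hy)] with u hu
        have hu' : φ.rOut ≤ dist u t := by
          have : ¬ dist u t ≤ R := by simpa [Metric.mem_closedBall] using hu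
          exact le_of_lt (not_le.1 this)
        have : φ u = 0 := φ.zero_of_le_dist hu'
        simp [hhdef, this]
      rw [hev.iteratedDeriv_eq]
      simp [iteratedDeriv_eq_iteratedFDeriv, iteratedFDeriv_zero_fun]
    have hbc : ∀ j, iteratedDeriv j h t₀ = 0 ∧ iteratedDeriv j h t₁ = 0 := by
      intro j
      have hd0 : R < dist t₀ t := by
        rw [Real.dist_eq, abs_of_nonpos (by linarith [htm.1])]
        have h3 : δt ≤ t - t₀ := min_le_left _ _
        linarith
      have hd1 : R < dist t₁ t := by
        rw [Real.dist_eq, abs_of_nonneg (by linarith [htm.2])]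
        have h3 : δt ≤ t₁ - t := min_le_right _ _
        linarith
      exact ⟨hzero t₀ hd0 j, hzero t₁ hd1 j⟩
    have hint0 : (∫ u in t₀..t₁, Ef u (h u)) = 0 := hyp h hhsm hbc
    -- rewrite as integral over ℝ of φ * g
    have hsupp : ∀ u, u ∉ Ioc t₀ t₁ → φ u * g u = 0 := by
      intro u hu
      have : φ u = 0 := by
        apply φ.zero_of_le_dist
        show R ≤ dist u t
        by_contra hlt
        push_neg at hlt
        have := abs_lt.1 (by rwa [Real.dist_eq] at hlt)
        have h1 : t₀ < u := by
          have := min_le_left (t - t₀) (t₁ - t); linarith [hRδt]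
        have h2 : u ≤ t₁ := by
          have := min_le_right (t - t₀) (t₁ - t); linarith [hRδt]
        exact hu ⟨h1, h2⟩
      simp [this]
    have hreal : (∫ u, φ u * g u) = 0 := by
      rw [← setIntegral_eq_integral_of_forall_compl_eq_zero (s := Ioc t₀ t₁) hsupp]
      rw [← intervalIntegral.integral_of_le ht.le]
      rw [← hint0]
      congr 1
      funext u
      simp [hhdef, _root_.map_smul, smul_eq_mul, hg]
    -- integrability facts
    have hφc : Continuous (φ : ℝ → ℝ) := φ.continuous
    have hφint : Integrable (φ : ℝ → ℝ) := φ.integrable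
    have hmulint : Integrable (fun u => φ u * (g u - c)) :=
      ((hφc.mul (hgc.sub continuous_const)).integrable_of_hasCompactSupport
        (φ.hasCompactSupport.mul_right))
    have hφgint : Integrable (fun u => φ u * g u) :=
      ((hφc.mul hgc).integrable_of_hasCompactSupport (φ.hasCompactSupport.mul_right))
    have hptwise : ∀ u, |φ u * (g u - c)| ≤ |c|/2 * φ u := by
      intro u
      rcases eq_or_ne (φ u) 0 with h0 | h0
      · simp [h0]
      · have husupp : u ∈ Function.support (φ : ℝ → ℝ) := h0
        rw [φ.support_eq] at husupp
        have : dist u t < δ := lt_trans (by simpa [Metric.mem_ball] using husupp) hRδ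
        have hbound := hδ u this
        have hφnn : 0 ≤ φ u := φ.nonneg
        rw [abs_mul, abs_of_nonneg hφnn]
        calc φ u * |g u - c| ≤ φ u * (|c|/2) := by
              exact mul_le_mul_of_nonneg_left hbound.le hφnn
          _ = |c|/2 * φ u := mul_comm _ _
    have hsub : (∫ u, φ u * (g u - c)) = - (c * ∫ u, (φ : ℝ → ℝ) u) := by
      have : (fun u => φ u * (g u - c)) = fun u => φ u * g u - φ u * c := by
        funext u; ring
      rw [this, integral_sub hφgint (hφint.mul_const c), hreal]
      rw [MeasureTheory.integral_mul_const]
      ring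
    have habs : |∫ u, φ u * (g u - c)| ≤ |c|/2 * ∫ u, (φ : ℝ → ℝ) u := by
      calc |∫ u, φ u * (g u - c)| ≤ ∫ u, |φ u * (g u - c)| := by
            simpa [Real.norm_eq_abs, abs_mul] using
              MeasureTheory.norm_integral_le_integral_norm (μ := volume)
                (fun u => φ u * (g u - c))
        _ ≤ ∫ u, |c|/2 * φ u := by
            refine integral_mono hmulint.abs (hφint.const_mul _) ?_
            intro u
            simpa [abs_mul] using hptwise u
        _ = |c|/2 * ∫ u, (φ : ℝ → ℝ) u := integral_const_mul _ _
    rw [hsub] at habs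
    have hφpos : 0 < ∫ u, (φ : ℝ → ℝ) u := φ.integral_pos
    rw [abs_neg, abs_mul, abs_of_pos hφpos] at habs
    nlinarith
  intro t htI
  have hsub : Icc t₀ t₁ ⊆ closure (Ioo t₀ t₁) := by rw [closure_Ioo ht.ne]
  have hclosed : IsClosed {u | Ef u = 0} := isClosed_eq hEf continuous_const
  exact hclosed.closure_subset_iff.2 (fun u hu => hIoo u hu) (hsub htI)

end Helpers

/-- **Higher-order Euler–Lagrange equations characterize critical points (standard case).**
A smooth curve `q` is a critical point of the action of a smooth `k`-th order Lagrangian `L`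
(with respect to all smooth variations whose derivatives of orders `0,…,k-1` vanish at the
endpoints) if and only if `∑_{r=0}^{k} (−1)^r D^r[t ↦ ∂_r L(jet_k q t)](t) = 0` on `[t₀, t₁]`. -/
theorem higher_order_euler_lagrange_iff_critical (n k : ℕ) (hn : 1 ≤ n) (hk : 1 ≤ k)
    (t₀ t₁ : ℝ) (ht : t₀ < t₁)
    (L : (Fin (k + 1) → EuclideanSpace ℝ (Fin n)) → ℝ) (hL : ContDiff ℝ (⊤ : ℕ∞) L)
    (q : ℝ → EuclideanSpace ℝ (Fin n)) (hq : ContDiff ℝ (⊤ : ℕ∞) q) :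
    (∀ h : ℝ → EuclideanSpace ℝ (Fin n), ContDiff ℝ (⊤ : ℕ∞) h →
        (∀ j < k, iteratedDeriv j h t₀ = 0 ∧ iteratedDeriv j h t₁ = 0) →
        HasDerivAt (fun s : ℝ => ∫ t in t₀..t₁, L (jet k (q + s • h) t)) 0 0) ↔
      ∀ t ∈ Set.Icc t₀ t₁,
        (∑ r ∈ Finset.range (k + 1),
          (-1 : ℝ) ^ r • iteratedDeriv r (fun u => pd L r (jet k q u)) t) = 0 := by
  set Ef : ℝ → EuclideanSpace ℝ (Fin n) →L[ℝ] ℝ := fun t =>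
    ∑ r ∈ Finset.range (k + 1),
      (-1 : ℝ) ^ r • iteratedDeriv r (fun u => pd L r (jet k q u)) t with hEf
  have hf : ∀ r : ℕ, ContDiff ℝ (⊤ : ℕ∞) (fun u => pd L r (jet k q u)) :=
    fun r => (contDiff_pd hL r).comp (contDiff_jet k hq)
  have hEfc : Continuous Ef := by
    apply continuous_finset_sum
    intro r _
    exact (contDiff_iteratedDeriv r (hf r)).continuous.const_smul ((-1:ℝ)^r)
  constructor
  · intro ha t htI
    refine fundamental ht hEfc ?_ t htI
    intro h hsm hbc
    have h1 := action_hasDerivAt k hL hq hsm (fun j _ => hbc j)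
    have h2 := ha h hsm (fun j _ => hbc j)
    exact h1.unique h2
  · intro hEL h hsm hbc
    have h1 := action_hasDerivAt k hL hq hsm hbc
    have hz : (∫ t in t₀..t₁, (∑ r ∈ Finset.range (k + 1),
        (-1 : ℝ) ^ r • iteratedDeriv r (fun u => pd L r (jet k q u)) t) (h t)) = 0 := by
      have heq : Set.EqOn (fun t => (∑ r ∈ Finset.range (k + 1),
          (-1 : ℝ) ^ r • iteratedDeriv r (fun u => pd L r (jet k q u)) t) (h t))
          (fun _ => (0:ℝ)) (Set.uIcc t₀ t₁) := by
        intro t htm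
        rw [Set.uIcc_of_le ht.le] at htm
        simp [hEL t htm]
      rw [intervalIntegral.integral_congr heq, intervalIntegral.integral_zero]
    rwa [hz] at h1
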